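/- arXiv:2112.02563 — 2 statements merged into one kernel-verified Lean document; each statement's English description precedes it below -/
import Mathlib

section
/- Let B be a Benson-alive family of White blocks of a configuration β, witnessed by a family of regions (Rⱼ), and let z be the union of all grids of the blocks of B together with all grids of the regions Rⱼ. If β' is any configuration that agrees with β on z, then: every grid belonging to a block of B is White-occupied in β'; each block b of B is contained in some White block of β'; and the family B' of White blocks of β' that contain some block of B is Benson-alive in β', witnessed by the same regions (Rⱼ). (RZ correctness at leaf nodes: the grids of unconditionally alive blocks and their regions form a relevance zone for unconditional life.) -/
/-- The set of White-occupied grids of a configuration. -/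
def White {G : Type*} (β : G → Option Bool) : Set G := {g | β g = some true}

/-- `b` is a block of the occupied set `occ`: a connected subset of `occ`
that is maximal among connected subsets of `occ`. -/
def IsBlock {G : Type*} (GG : SimpleGraph G) (occ : Set G) (b : Set G) : Prop :=
  b ⊆ occ ∧ (GG.induce b).Connected ∧
    ∀ b', b ⊆ b' → b' ⊆ occ → (GG.induce b').Connected → b' = b

/-- `R` is vital to the block `b`: every empty grid of `R` is adjacent to some grid of `b`. -/
def Vital {G : Type*} (GG : SimpleGraph G) (β : G → Option Bool) (R b : Set G) : Prop :=
  ∀ g ∈ R, β g = none → ∃ x ∈ b, GG.Adj g x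

/-- `R` is enclosed by the family of blocks `B`: every grid outside `R` adjacent to
some grid of `R` belongs to a block of `B`. -/
def Enclosed {G : Type*} (GG : SimpleGraph G) (B : Set (Set G)) (R : Set G) : Prop :=
  ∀ g ∉ R, (∃ r ∈ R, GG.Adj g r) → ∃ b ∈ B, g ∈ b

/-- The family `B` of White blocks of `β` is Benson-alive, witnessed by the family
of regions `R`: the regions are pairwise disjoint, contain no White grid, are each
enclosed by `B`, and each block of `B` has at least two of the regions vital to it. -/
def BensonWitness {G J : Type*} (GG : SimpleGraph G) (β : G → Option Bool)
    (B : Set (Set G)) (R : J → Set G) : Prop :=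
  (∀ b ∈ B, IsBlock GG (White β) b) ∧
    Pairwise (Function.onFun Disjoint R) ∧
    (∀ j, ∀ g ∈ R j, β g ≠ some true) ∧
    (∀ j, Enclosed GG B (R j)) ∧
    (∀ b ∈ B, ∃ j₁ j₂, j₁ ≠ j₂ ∧ Vital GG β (R j₁) b ∧ Vital GG β (R j₂) b)

/-- Reachability is monotone under inclusion of induced subgraphs. -/
lemma reach_mono {G : Type*} (GG : SimpleGraph G) {s t : Set G} (hst : s ⊆ t)
    {x y : s} (h : (GG.induce s).Reachable x y) :
    (GG.induce t).Reachable ⟨x, hst x.2⟩ ⟨y, hst y.2⟩ :=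
  h.map (SimpleGraph.induceHom (SimpleGraph.Hom.id : GG →g GG) (Set.mapsTo_id s |>.mono_right hst))

/-- A walk whose support lies in `s` yields reachability in the induced graph on `s`. -/
lemma walk_in_induce {V : Type*} {H : SimpleGraph V} {s : Set V} {u v : V} (w : H.Walk u v)
    (hs : ∀ x ∈ w.support, x ∈ s) :
    (H.induce s).Reachable ⟨u, hs u w.start_mem_support⟩ ⟨v, hs v w.end_mem_support⟩ := by
  induction w with
  | nil => rfl
  | @cons a c d hadj p ih =>
    have h1 : a ∈ s := hs a (SimpleGraph.Walk.start_mem_support _)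
    have h2 : ∀ x ∈ p.support, x ∈ s := fun x hx => hs x (by simp [hx])
    have hadj' : (H.induce s).Adj ⟨a, h1⟩ ⟨c, h2 c p.start_mem_support⟩ := hadj
    exact (hadj'.reachable).trans (ih h2)

/-- The connected component of a point inside an occupied set is a block. -/
lemma comp_isBlock {G : Type*} (GG : SimpleGraph G) (occ : Set G) (g₀ : G) (hg₀ : g₀ ∈ occ) :
    IsBlock GG occ (Subtype.val '' {x : occ | (GG.induce occ).Reachable ⟨g₀, hg₀⟩ x}) := by
  classical
  set b : Set G := Subtype.val '' {x : occ | (SimpleGraph.induce occ GG).Reachable ⟨g₀, hg₀⟩ x} with hb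
  have hbocc : b ⊆ occ := by rintro g ⟨x, _, rfl⟩; exact x.2
  have hg₀b : g₀ ∈ b := ⟨⟨g₀, hg₀⟩, SimpleGraph.Reachable.refl _, rfl⟩
  refine ⟨hbocc, ?_, ?_⟩
  · haveI : Nonempty b := ⟨⟨g₀, hg₀b⟩⟩
    refine ⟨fun x y => ?_⟩
    obtain ⟨u, hu, hux⟩ := x.2
    obtain ⟨v, hv, hvy⟩ := y.2
    obtain ⟨w⟩ := hu.symm.trans hv
    -- map the walk down to `GG`
    have hsup : ∀ g ∈ (w.map (SimpleGraph.Embedding.induce occ).toHom).support, g ∈ b := by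
      intro g hg
      rw [SimpleGraph.Walk.support_map] at hg
      obtain ⟨y', hy', rfl⟩ := List.mem_map.mp hg
      exact ⟨y', hu.trans ⟨w.takeUntil y' hy'⟩, rfl⟩
    have := walk_in_induce (w.map (SimpleGraph.Embedding.induce occ).toHom) hsup
    have hx : x = ⟨(u : G), ⟨u, hu, rfl⟩⟩ := Subtype.ext hux.symm
    have hy : y = ⟨(v : G), ⟨v, hv, rfl⟩⟩ := Subtype.ext hvy.symm
    rw [hx, hy]
    exact this
  · intro b' hbb' hb'occ hconn
    apply Set.Subset.antisymm _ hbb'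
    intro x hx
    have hg₀' : g₀ ∈ b' := hbb' hg₀b
    have h1 := hconn.preconnected ⟨g₀, hg₀'⟩ ⟨x, hx⟩
    have h2 := reach_mono GG hb'occ h1
    exact ⟨⟨x, hb'occ hx⟩, h2, rfl⟩

/-- RZ correctness at leaf nodes: the grids of a Benson-alive (unconditionally alive)
family of White blocks together with the grids of its witnessing regions form a
relevance zone for unconditional life. -/
theorem benson_rz {G J : Type*} (GG : SimpleGraph G) (β β' : G → Option Bool)
    (B : Set (Set G)) (R : J → Set G)
    (hW : BensonWitness GG β B R)
    (z : Set G) (hz : z = (⋃ b ∈ B, b) ∪ ⋃ j, R j)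
    (hagree : ∀ g ∈ z, β' g = β g) :
    (∀ b ∈ B, ∀ g ∈ b, β' g = some true) ∧
    (∀ b ∈ B, ∃ b', IsBlock GG (White β') b' ∧ b ⊆ b') ∧
    BensonWitness GG β' {b' | IsBlock GG (White β') b' ∧ ∃ b ∈ B, b ⊆ b'} R := by
  obtain ⟨hblk, hdisj, hempty, hencl, hvital⟩ := hW
  subst hz
  have hbz : ∀ b ∈ B, ∀ g ∈ b, g ∈ (⋃ b ∈ B, b) ∪ ⋃ j, R j :=
    fun b hb g hg => Or.inl (Set.mem_biUnion hb hg)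
  have hRz : ∀ j, ∀ g ∈ R j, g ∈ (⋃ b ∈ B, b) ∪ ⋃ j, R j :=
    fun j g hg => Or.inr (Set.mem_iUnion.mpr ⟨j, hg⟩)
  have h1 : ∀ b ∈ B, ∀ g ∈ b, β' g = some true := fun b hb g hg => by
    rw [hagree g (hbz b hb g hg)]; exact (hblk b hb).1 hg
  have h2 : ∀ b ∈ B, ∃ b', IsBlock GG (White β') b' ∧ b ⊆ b' := by
    intro b hb
    obtain ⟨hsub, hconn, hmax⟩ := hblk b hb
    obtain ⟨⟨g₀, hg₀⟩⟩ := hconn.nonempty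
    have hbW' : b ⊆ White β' := fun g hg => h1 b hb g hg
    refine ⟨_, comp_isBlock GG (White β') g₀ (hbW' hg₀), ?_⟩
    intro x hx
    have hr := hconn.preconnected ⟨g₀, hg₀⟩ ⟨x, hx⟩
    exact ⟨⟨x, hbW' hx⟩, reach_mono GG hbW' hr, rfl⟩
  refine ⟨h1, h2, ?_, hdisj, ?_, ?_, ?_⟩
  · rintro b' ⟨hb', -⟩; exact hb'
  · intro j g hg; rw [hagree g (hRz j g hg)]; exact hempty j g hg
  · intro j g hg hadj
    obtain ⟨b, hb, hgb⟩ := hencl j g hg hadj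
    obtain ⟨b', hb', hbb'⟩ := h2 b hb
    exact ⟨b', ⟨hb', b, hb, hbb'⟩, hbb' hgb⟩
  · rintro b' ⟨hb', b, hb, hbb'⟩
    obtain ⟨j₁, j₂, hne, hv1, hv2⟩ := hvital b hb
    refine ⟨j₁, j₂, hne, ?_, ?_⟩
    · intro g hg hgnone
      obtain ⟨x, hx, hadjx⟩ := hv1 g hg (hagree g (hRz j₁ g hg) ▸ hgnone)
      exact ⟨x, hbb' hx, hadjx⟩
    · intro g hg hgnone
      obtain ⟨x, hx, hadjx⟩ := hv2 g hg (hagree g (hRz j₂ g hg) ▸ hgnone)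
      exact ⟨x, hbb' hx, hadjx⟩
end

section
/- (Soundness of relevance-zone pruning at an AND node.) Let Win be a predicate on board configurations. Let p be a position of the AND-player with configuration β(p), and suppose some legal AND-player move m₁ at p leads to a configuration β₁ with Win β₁ which has a relevance zone z with m₁ ∉ z, and β₁ agrees with β(p) on z (the null move m₁ changed nothing inside z). Then for every legal AND-player move m at p whose grid lies outside z and which leaves the zone pattern of z unchanged (i.e., the configuration β_m after m still agrees with β(p) on z), the resulting configuration satisfies Win β_m. Consequently, when searching the AND node p, every legal move outside z may be pruned: only moves inside the must-play region z need to be examined. -/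
/-- Two board configurations agree on a zone `z` (have the same zone pattern). -/
def Agrees {G S : Type*} (z : Set G) (β₁ β₂ : G → Option S) : Prop :=
  ∀ g ∈ z, β₁ g = β₂ g

/-- `z` is a relevance zone (RZ) for the configuration `β` with respect to the
predicate `Win`: every configuration agreeing with `β` on `z` also satisfies `Win`. -/
def IsRZ {G S : Type*} (Win : (G → Option S) → Prop) (β : G → Option S) (z : Set G) : Prop :=
  ∀ β' : G → Option S, Agrees z β' β → Win β'

/-- Soundness of relevance-zone pruning at an AND node.
`legal m` states that `m` is a legal AND-player move at position `p` (whose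
configuration is `βp`), and `result m` is the configuration reached after `m`.
If a null move `m₁` (a legal move whose resulting winning configuration has a
relevance zone `z` with `m₁ ∉ z` and unchanged pattern inside `z`) exists, then every
legal move outside `z` leaving the pattern of `z` unchanged also leads to a win;
hence only moves inside the must-play region `z` need to be examined. -/
theorem rz_pruning_and_node {G S : Type*} (Win : (G → Option S) → Prop)
    (legal : G → Prop) (result : G → (G → Option S))
    (βp : G → Option S) (z : Set G) (m₁ : G)
    (hlegal₁ : legal m₁) (hwin₁ : Win (result m₁))
    (hrz : IsRZ Win (result m₁) z) (hm₁ : m₁ ∉ z)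
    (hnull : Agrees z (result m₁) βp) :
    ∀ m, legal m → m ∉ z → Agrees z (result m) βp → Win (result m) := by
  intro m _ _ hag
  exact hrz _ fun g hg => (hag g hg).trans (hnull g hg).symm
end
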